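/- For any state ρ supported on the antisymmetric subspace of H^{⊗n} and any unitary U on H, A_n† (U^{⊗(d-n)} (A_n ρ A_n†) (U†)^{⊗(d-n)}) A_n = (U*)^{⊗n} ρ (U^T)^{⊗n}. In other words, encoding with A_n, applying d-n parallel uses of U, and decoding with A_n† implements the conjugate unitary (U*)^{⊗n} on antisymmetric states. -/

import Mathlib

open Matrix
open scoped ComplexOrder

/-- The `m`-fold tensor power `U^{⊗m}` of a `d × d` matrix. -/
def tpow {d : ℕ} (m : ℕ) (U : Matrix (Fin d) (Fin d) ℂ) :
    Matrix (Fin m → Fin d) (Fin m → Fin d) ℂ :=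
  Matrix.of fun x y => ∏ k, U (x k) (y k)

/-- The antisymmetrizer `(1/n!) ∑_{σ ∈ S_n} sgn(σ) P_σ`, the orthogonal projector onto the
antisymmetric subspace of `(ℂ^d)^{⊗n}`. -/
noncomputable def antiProj (d n : ℕ) : Matrix (Fin n → Fin d) (Fin n → Fin d) ℂ :=
  ((n.factorial : ℂ))⁻¹ • ∑ σ : Equiv.Perm (Fin n), ((Equiv.Perm.sign σ : ℤ) : ℂ) •
    Matrix.of (fun x y : Fin n → Fin d => if y = x ∘ σ then (1 : ℂ) else 0)

/-- The operator `A_n = (1/√((d-n)! n!)) ∑_{π ∈ S_d} sgn(π)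
|e_{π(n+1)},…,e_{π(d)}⟩⟨e_{π(1)},…,e_{π(n)}|`. -/
noncomputable def matA (d n : ℕ) (hn : n ≤ d) :
    Matrix (Fin (d - n) → Fin d) (Fin n → Fin d) ℂ :=
  Matrix.of fun y x => ((Real.sqrt ((d - n).factorial * n.factorial) : ℂ))⁻¹ *
    ∑ π : Equiv.Perm (Fin d), ((Equiv.Perm.sign π : ℤ) : ℂ) *
      (if (∀ k : Fin (d - n), y k = π ⟨n + (k : ℕ), by have := k.isLt; omega⟩) ∧
          (∀ k : Fin n, x k = π (Fin.castLE hn k)) then 1 else 0)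

open Equiv Finset
variable {d n : ℕ}

namespace Stmt7Aux

/-- head inclusion -/
def ι (hn : n ≤ d) : Fin n → Fin d := Fin.castLE hn
/-- tail inclusion -/
def ν (hn : n ≤ d) : Fin (d - n) → Fin d :=
  fun k => ⟨n + (k : ℕ), by have := k.isLt; omega⟩

/-- the sum equiv -/
def eqv (hn : n ≤ d) : Fin n ⊕ Fin (d - n) ≃ Fin d :=
  finSumFinEquiv.trans (finCongr (by omega))

@[simp] lemma eqv_inl (hn : n ≤ d) (k : Fin n) : eqv hn (Sum.inl k) = ι hn k := by
  simp [eqv, ι]; ext; simp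

@[simp] lemma eqv_inr (hn : n ≤ d) (k : Fin (d - n)) : eqv hn (Sum.inr k) = ν hn k := by
  simp [eqv, ν]; ext; simp

/-- glue two tuples -/
def glue (hn : n ≤ d) {α : Type*} (x : Fin n → α) (y : Fin (d - n) → α) : Fin d → α :=
  fun i => if h : (i : ℕ) < n then x ⟨i, h⟩ else y ⟨(i : ℕ) - n, by have := i.isLt; omega⟩

@[simp] lemma glue_ι (hn : n ≤ d) {α : Type*} (x : Fin n → α) (y : Fin (d - n) → α)
    (k : Fin n) : glue hn x y (ι hn k) = x k := by
  simp [glue, ι, Fin.castLE, k.isLt]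

@[simp] lemma glue_ν (hn : n ≤ d) {α : Type*} (x : Fin n → α) (y : Fin (d - n) → α)
    (k : Fin (d - n)) : glue hn x y (ν hn k) = y k := by
  have : ¬ ((ν hn k : ℕ) < n) := by simp [ν]
  simp only [glue, this, dif_neg, not_false_iff]
  congr 1
  ext
  simp [ν]

lemma glue_eq_iff (hn : n ≤ d) {α : Type*} (x : Fin n → α) (y : Fin (d - n) → α)
    (w : Fin d → α) : glue hn x y = w ↔ ((∀ k, x k = w (ι hn k)) ∧ ∀ k, y k = w (ν hn k)) := by
  constructor
  · rintro rfl
    exact ⟨fun k => (glue_ι hn x y k).symm, fun k => (glue_ν hn x y k).symm⟩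
  · rintro ⟨h1, h2⟩
    funext i
    by_cases h : (i : ℕ) < n
    · have : i = ι hn ⟨i, h⟩ := by ext; simp [ι]
      rw [this, glue_ι, h1]
    · have hi : i = ν hn ⟨(i : ℕ) - n, by have := i.isLt; omega⟩ := by ext; simp [ν]; omega
      rw [hi, glue_ν, h2]

lemma glue_bijective (hn : n ≤ d) {α : Type*} :
    Function.Bijective (fun p : (Fin n → α) × (Fin (d - n) → α) => glue hn p.1 p.2) := by
  constructor
  · rintro ⟨x, y⟩ ⟨x', y'⟩ h
    simp only [Prod.mk.injEq]
    constructor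
    · funext k
      have := congrFun h (ι hn k)
      simpa using this
    · funext k
      have := congrFun h (ν hn k)
      simpa using this
  · intro w
    exact ⟨⟨fun k => w (ι hn k), fun k => w (ν hn k)⟩,
      ((glue_eq_iff hn _ _ w).2 ⟨fun _ => rfl, fun _ => rfl⟩)⟩



/-- sign as a complex number -/
noncomputable def sgn {β : Type*} [DecidableEq β] [Fintype β] (π : Perm β) : ℂ :=
  ((Equiv.Perm.sign π : ℤ) : ℂ)

@[simp] lemma sgn_mul {β : Type*} [DecidableEq β] [Fintype β] (π τ : Perm β) :
    sgn (π * τ) = sgn π * sgn τ := by simp [sgn]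

@[simp] lemma sgn_mul_self {β : Type*} [DecidableEq β] [Fintype β] (π : Perm β) :
    sgn π * sgn π = 1 := by
  simp [sgn, ← Int.cast_mul, ← Units.val_mul]

/-- the fully antisymmetric tensor -/
noncomputable def Psi (d : ℕ) (w : Fin d → Fin d) : ℂ :=
  ∑ π : Perm (Fin d), sgn π * (if ⇑π = w then 1 else 0)

lemma Psi_perm (σ : Perm (Fin d)) : Psi d ⇑σ = sgn σ := by
  rw [Psi, Finset.sum_eq_single σ]
  · simp
  · intro π _ hπ
    rw [if_neg, mul_zero]
    exact fun h => hπ (Equiv.coe_fn_injective h)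
  · simp

lemma Psi_of_not_injective {w : Fin d → Fin d} (hw : ¬ Function.Injective w) :
    Psi d w = 0 := by
  rw [Psi]
  apply Finset.sum_eq_zero
  intro π _
  rw [if_neg, mul_zero]
  rintro rfl
  exact hw π.injective

/-- star of Psi -/
@[simp] lemma star_Psi (w : Fin d → Fin d) : star (Psi d w) = Psi d w := by
  rw [Psi, star_sum]
  congr 1; funext π
  simp [sgn, apply_ite (star : ℂ → ℂ)]

/-- Key determinant identity. -/
lemma det_sum (U : Matrix (Fin d) (Fin d) ℂ) (w : Fin d → Fin d) :
    ∑ z : Fin d → Fin d, (∏ i, U (w i) (z i)) * Psi d z = U.det * Psi d w := by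
  have step1 : ∑ z : Fin d → Fin d, (∏ i, U (w i) (z i)) * Psi d z
      = ∑ π : Perm (Fin d), sgn π * ∏ i, U (w i) (π i) := by
    simp only [Psi, Finset.mul_sum]
    rw [Finset.sum_comm]
    congr 1; funext π
    rw [Finset.sum_eq_single ⇑π]
    · simp [mul_comm]
    · intro z _ hz
      rw [if_neg (fun h => hz h.symm), mul_zero, mul_zero]
    · simp
  rw [step1]
  have step2 : ∑ π : Perm (Fin d), sgn π * ∏ i, U (w i) (π i)
      = (U.submatrix w id)ᵀ.det := by
    rw [Matrix.det_apply']
    apply Finset.sum_congr rfl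
    intro π _
    simp [sgn, Matrix.transpose_apply, Matrix.submatrix_apply]
  rw [step2, Matrix.det_transpose]
  by_cases hw : Function.Injective w
  · have hbij : Function.Bijective w := Finite.injective_iff_bijective.1 hw
    set σ : Perm (Fin d) := Equiv.ofBijective w hbij with hσ
    have hwσ : w = ⇑σ := rfl
    rw [hwσ, Psi_perm]
    rw [Matrix.det_permute]
    simp [sgn, mul_comm]
  · rw [Psi_of_not_injective hw, mul_zero]
    obtain ⟨i, j, hij, hne⟩ : ∃ i j, w i = w j ∧ i ≠ j := by
      rw [Function.Injective] at hw
      push_neg at hw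
      obtain ⟨i, j, h1, h2⟩ := hw
      exact ⟨i, j, h1, h2⟩
    apply Matrix.det_zero_of_row_eq hne
    funext k
    simp [Matrix.submatrix_apply, hij]

/-- tpow multiplicativity -/

lemma tpow_mul (m : ℕ) (M N : Matrix (Fin d) (Fin d) ℂ) :
    tpow m M * tpow m N = tpow m (M * N) := by
  ext x y
  simp only [Matrix.mul_apply, tpow, Matrix.of_apply]
  rw [Finset.prod_univ_sum]
  apply Finset.sum_congr
  · simp [Fintype.piFinset_univ]
  · intro z _
    rw [Finset.prod_mul_distrib]

lemma tpow_one (m : ℕ) : tpow m (1 : Matrix (Fin d) (Fin d) ℂ) = 1 := by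
  ext x y
  simp only [tpow, Matrix.of_apply, Matrix.one_apply]
  by_cases h : x = y
  · subst h; simp
  · rw [if_neg h]
    obtain ⟨k, hk⟩ := Function.ne_iff.1 h
    apply Finset.prod_eq_zero (Finset.mem_univ k)
    simp [Matrix.one_apply, hk]

lemma tpow_conjTranspose (m : ℕ) (M : Matrix (Fin d) (Fin d) ℂ) :
    (tpow m M)ᴴ = tpow m Mᴴ := by
  ext x y
  simp [tpow, Matrix.conjTranspose_apply]

/-- the basic permutation matrix commutes with tpow -/
lemma permMatrix_tpow_comm (m : ℕ) (σ : Equiv.Perm (Fin m)) (M : Matrix (Fin d) (Fin d) ℂ) :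
    (Matrix.of (fun x y : Fin m → Fin d => if y = x ∘ σ then (1 : ℂ) else 0)) * tpow m M
      = tpow m M * Matrix.of (fun x y : Fin m → Fin d => if y = x ∘ σ then (1 : ℂ) else 0) := by
  ext x y
  simp only [Matrix.mul_apply, Matrix.of_apply, tpow]
  rw [Finset.sum_eq_single (x ∘ σ), Finset.sum_eq_single (y ∘ ⇑σ⁻¹)]
  · have h1 : (y = (y ∘ ⇑σ⁻¹) ∘ ⇑σ) ↔ True := by
      simp only [iff_true]
      funext k; simp
    rw [if_pos rfl, if_pos (by funext k; simp)]
    simp only [one_mul, mul_one]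
    rw [← Equiv.prod_comp σ (fun k => M (x k) ((y ∘ ⇑σ⁻¹) k))]
    apply Finset.prod_congr rfl
    intro k _
    simp
  · intro z _ hz
    rw [if_neg, mul_zero]
    intro h
    apply hz
    funext k
    have := congrFun h (σ⁻¹ k)
    simpa using this.symm
  · simp
  · intro z _ hz
    rw [if_neg (fun h => hz h), zero_mul]
  · simp

lemma antiProj_tpow_comm (M : Matrix (Fin d) (Fin d) ℂ) :
    antiProj d n * tpow n M = tpow n M * antiProj d n := by
  simp only [antiProj, Matrix.smul_mul, Matrix.mul_smul, Finset.sum_mul, Finset.mul_sum]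
  congr 1
  apply Finset.sum_congr rfl
  intro σ _
  rw [permMatrix_tpow_comm n σ M]


/-- the normalization constant -/
noncomputable def cst (d n : ℕ) : ℂ :=
  (((Real.sqrt ((d - n).factorial * n.factorial) : ℝ) : ℂ))⁻¹

@[simp] lemma star_cst : star (cst d n) = cst d n := by
  simp [cst, ← Complex.ofReal_inv]

lemma cst_mul_cst : cst d n * cst d n = ((((d - n).factorial * n.factorial : ℕ) : ℂ))⁻¹ := by
  rw [cst, ← mul_inv, ← Complex.ofReal_mul,
    Real.mul_self_sqrt (by positivity)]
  norm_num

lemma matA_apply (hn : n ≤ d) (y : Fin (d - n) → Fin d) (x : Fin n → Fin d) :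
    matA d n hn y x = cst d n * Psi d (glue hn x y) := by
  rw [matA, Matrix.of_apply, Psi, cst]
  congr 1
  apply Finset.sum_congr rfl
  intro π _
  rw [show ((Equiv.Perm.sign π : ℤ) : ℂ) = sgn π from rfl]
  congr 1
  have hiff : ((∀ k : Fin (d - n), y k = π ⟨n + (k : ℕ), by have := k.isLt; omega⟩) ∧
      (∀ k : Fin n, x k = π (Fin.castLE hn k))) ↔ (⇑π = glue hn x y) := by
    constructor
    · rintro ⟨h1, h2⟩
      exact ((glue_eq_iff hn x y ⇑π).2 ⟨h2, h1⟩).symm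
    · intro h
      have h2 := (glue_eq_iff hn x y ⇑π).1 h.symm
      exact ⟨h2.2, h2.1⟩
  rw [if_congr hiff rfl rfl]

lemma prod_split (hn : n ≤ d) (f : Fin d → ℂ) :
    ∏ i, f i = (∏ k, f (ι hn k)) * ∏ k, f (ν hn k) := by
  rw [← Equiv.prod_comp (eqv hn) f, Fintype.prod_sum_type]
  simp

lemma intertwine (hn : n ≤ d) (U : Matrix (Fin d) (Fin d) ℂ) :
    tpow (d - n) U * matA d n hn * tpow n Uᵀ = U.det • matA d n hn := by
  ext b a
  calc (tpow (d - n) U * matA d n hn * tpow n Uᵀ) b a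
      = ∑ p : (Fin n → Fin d) × (Fin (d - n) → Fin d),
        (∏ i, U (glue hn a b i) (glue hn p.1 p.2 i)) * (cst d n * Psi d (glue hn p.1 p.2)) := by
        rw [Fintype.sum_prod_type]
        simp only [Matrix.mul_apply, Finset.sum_mul]
        apply Finset.sum_congr rfl
        intro x' _
        apply Finset.sum_congr rfl
        intro y' _
        rw [matA_apply, prod_split hn]
        simp only [glue_ι, glue_ν, tpow, Matrix.of_apply, Matrix.transpose_apply]
        ring
    _ = ∑ z : Fin d → Fin d, (∏ i, U (glue hn a b i) (z i)) * (cst d n * Psi d z) :=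
        Fintype.sum_bijective _ (glue_bijective hn) _ _ (fun p => rfl)
    _ = cst d n * (U.det * Psi d (glue hn a b)) := by
        rw [← det_sum U (glue hn a b), Finset.mul_sum]
        apply Finset.sum_congr rfl
        intro z _
        ring
    _ = (U.det • matA d n hn) b a := by
        rw [Matrix.smul_apply, matA_apply, smul_eq_mul]
        ring


/-- a permutation of a sum type fixing all right elements comes from the left -/
lemma perm_fix_inr {α β : Type*} [DecidableEq α] [DecidableEq β]
    (p : Perm (α ⊕ β)) (h : ∀ b, p (Sum.inr b) = Sum.inr b) :
    ∃ σ : Perm α, p = Equiv.sumCongr σ (Equiv.refl β) := by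
  have hinv : ∀ b, p⁻¹ (Sum.inr b) = Sum.inr b := by
    intro b
    conv_lhs => rw [← h b]
    simp
  have hl : ∀ (q : Perm (α ⊕ β)), (∀ b, q (Sum.inr b) = Sum.inr b) →
      ∀ a, ∃ a', q (Sum.inl a) = Sum.inl a' := by
    intro q hq a
    rcases hp : q (Sum.inl a) with a' | b'
    · exact ⟨a', rfl⟩
    · exact absurd (q.injective (hp.trans (hq b').symm)) (by simp)
  choose f hf using hl p h
  choose g hg using hl p⁻¹ hinv
  have hgf : ∀ a, g (f a) = a := by
    intro a
    have := hg (f a)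
    rw [← hf a, Equiv.Perm.inv_def, Equiv.symm_apply_apply] at this
    exact (Sum.inl.inj this).symm
  have hfg : ∀ a, f (g a) = a := by
    intro a
    have := hf (g a)
    rw [← hg a, Equiv.Perm.inv_def, Equiv.apply_symm_apply] at this
    exact (Sum.inl.inj this).symm
  refine ⟨⟨f, g, hgf, hfg⟩, ?_⟩
  apply Equiv.ext
  rintro (a | b)
  · simpa using hf a
  · simpa using h b

lemma perm_fix_inl {α β : Type*} [DecidableEq α] [DecidableEq β]
    (p : Perm (α ⊕ β)) (h : ∀ a, p (Sum.inl a) = Sum.inl a) :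
    ∃ τ : Perm β, p = Equiv.sumCongr (Equiv.refl α) τ := by
  set q : Perm (β ⊕ α) := (Equiv.sumComm α β).permCongr p with hq
  have hq' : ∀ a, q (Sum.inr a) = Sum.inr a := by
    intro a
    simp [hq, Equiv.permCongr_apply, h a]
  obtain ⟨τ, hτ⟩ := perm_fix_inr q hq'
  refine ⟨τ, ?_⟩
  apply Equiv.ext
  rintro (a | b)
  · simpa using h a
  · have h2 := congrArg (fun (r : Perm (β ⊕ α)) => r (Sum.inl b)) hτ
    have h3 : p (Sum.inr b) = (Equiv.sumComm α β).symm (Sum.inl (τ b)) := by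
      apply (Equiv.sumComm α β).injective
      simpa [hq, Equiv.permCongr_apply] using h2
    simpa using h3


def extPerm (hn : n ≤ d) (σ : Perm (Fin n)) : Perm (Fin d) :=
  (eqv hn).permCongr (Equiv.sumCongr σ (Equiv.refl (Fin (d - n))))

def extPerm' (hn : n ≤ d) (τ : Perm (Fin (d - n))) : Perm (Fin d) :=
  (eqv hn).permCongr (Equiv.sumCongr (Equiv.refl (Fin n)) τ)

@[simp] lemma extPerm_ι (hn : n ≤ d) (σ : Perm (Fin n)) (k : Fin n) :
    extPerm hn σ (ι hn k) = ι hn (σ k) := by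
  rw [extPerm, Equiv.permCongr_apply, ← eqv_inl hn k, Equiv.symm_apply_apply]
  simp

@[simp] lemma extPerm_ν (hn : n ≤ d) (σ : Perm (Fin n)) (k : Fin (d - n)) :
    extPerm hn σ (ν hn k) = ν hn k := by
  rw [extPerm, Equiv.permCongr_apply, ← eqv_inr hn k, Equiv.symm_apply_apply]
  simp

@[simp] lemma extPerm'_ι (hn : n ≤ d) (τ : Perm (Fin (d - n))) (k : Fin n) :
    extPerm' hn τ (ι hn k) = ι hn k := by
  rw [extPerm', Equiv.permCongr_apply, ← eqv_inl hn k, Equiv.symm_apply_apply]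
  simp

@[simp] lemma sgn_extPerm (hn : n ≤ d) (σ : Perm (Fin n)) :
    sgn (extPerm hn σ) = sgn σ := by
  simp [sgn, extPerm, Equiv.Perm.sign_permCongr, Equiv.Perm.sign_sumCongr]

lemma extPerm_injective (hn : n ≤ d) : Function.Injective (extPerm hn) := by
  intro σ₁ σ₂ h
  have h2 : Equiv.sumCongr σ₁ (Equiv.refl (Fin (d - n))) =
      Equiv.sumCongr σ₂ (Equiv.refl (Fin (d - n))) :=
    ((eqv hn).permCongr).injective h
  apply Equiv.ext
  intro a
  have := congrArg (fun (p : Perm (Fin n ⊕ Fin (d - n))) => p (Sum.inl a)) h2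
  simpa using this

lemma extPerm'_injective (hn : n ≤ d) : Function.Injective (extPerm' hn) := by
  intro τ₁ τ₂ h
  have h2 : Equiv.sumCongr (Equiv.refl (Fin n)) τ₁ =
      Equiv.sumCongr (Equiv.refl (Fin n)) τ₂ :=
    ((eqv hn).permCongr).injective h
  apply Equiv.ext
  intro b
  have := congrArg (fun (p : Perm (Fin n ⊕ Fin (d - n))) => p (Sum.inr b)) h2
  simpa using this

@[simp] lemma eqv_symm_ι (hn : n ≤ d) (k : Fin n) : (eqv hn).symm (ι hn k) = Sum.inl k := by
  rw [← eqv_inl hn k, Equiv.symm_apply_apply]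

@[simp] lemma eqv_symm_ν (hn : n ≤ d) (k : Fin (d - n)) :
    (eqv hn).symm (ν hn k) = Sum.inr k := by
  rw [← eqv_inr hn k, Equiv.symm_apply_apply]

lemma fix_ν_eq_extPerm (hn : n ≤ d) (ρ : Perm (Fin d)) (h : ∀ k, ρ (ν hn k) = ν hn k) :
    ∃ σ : Perm (Fin n), ρ = extPerm hn σ := by
  set p := ((eqv hn).permCongr).symm ρ with hpdef
  have hp : ∀ b, p (Sum.inr b) = Sum.inr b := by
    intro b
    rw [hpdef, Equiv.permCongr_symm, Equiv.permCongr_apply]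
    simp [h b]
  obtain ⟨σ, hσ⟩ := perm_fix_inr p hp
  refine ⟨σ, ?_⟩
  have : ρ = (eqv hn).permCongr p := ((eqv hn).permCongr.apply_symm_apply ρ).symm
  rw [this, hσ]
  rfl

lemma fix_ι_eq_extPerm' (hn : n ≤ d) (ρ : Perm (Fin d)) (h : ∀ k, ρ (ι hn k) = ι hn k) :
    ∃ τ : Perm (Fin (d - n)), ρ = extPerm' hn τ := by
  set p := ((eqv hn).permCongr).symm ρ with hpdef
  have hp : ∀ a, p (Sum.inl a) = Sum.inl a := by
    intro a
    rw [hpdef, Equiv.permCongr_symm, Equiv.permCongr_apply]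
    simp [h a]
  obtain ⟨τ, hτ⟩ := perm_fix_inl p hp
  refine ⟨τ, ?_⟩
  have : ρ = (eqv hn).permCongr p := ((eqv hn).permCongr.apply_symm_apply ρ).symm
  rw [this, hτ]
  rfl

lemma exists_extension (hn : n ≤ d) {x : Fin n → Fin d} (hx : Function.Injective x) :
    ∃ π : Perm (Fin d), ∀ k, π (ι hn k) = x k := by
  classical
  have hι : Function.Injective (ι hn) := Fin.castLE_injective hn
  let e : {i : Fin d // i ∈ Set.range (ι hn)} ≃ {i : Fin d // i ∈ Set.range x} :=
    (Equiv.ofInjective (ι hn) hι).symm.trans (Equiv.ofInjective x hx)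
  refine ⟨e.extendSubtype, fun k => ?_⟩
  rw [Equiv.extendSubtype_apply_of_mem e (ι hn k) ⟨k, rfl⟩]
  show ((Equiv.ofInjective x hx) ((Equiv.ofInjective (ι hn) hι).symm ⟨ι hn k, ⟨k, rfl⟩⟩) : Fin d)
    = x k
  rw [Equiv.ofInjective_symm_apply]
  rfl

lemma card_extensions (hn : n ≤ d) {x : Fin n → Fin d} (hx : Function.Injective x) :
    (Finset.univ.filter (fun π : Perm (Fin d) => x = ⇑π ∘ ι hn)).card
      = (d - n).factorial := by
  obtain ⟨π₀, hπ₀⟩ := exists_extension hn hx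
  have key : (Finset.univ : Finset (Perm (Fin (d - n)))).card
      = (Finset.univ.filter (fun π : Perm (Fin d) => x = ⇑π ∘ ι hn)).card := by
    apply Finset.card_bij (fun (τ : Perm (Fin (d - n))) _ => π₀ * extPerm' hn τ)
    · intro τ _
      simp only [Finset.mem_filter, Finset.mem_univ, true_and]
      funext k
      simp [Equiv.Perm.mul_apply, hπ₀ k]
    · intro τ₁ _ τ₂ _ h
      exact extPerm'_injective hn (mul_left_cancel h)
    · intro π hπ
      simp only [Finset.mem_filter, Finset.mem_univ, true_and] at hπ
      have hfix : ∀ k, (π₀⁻¹ * π) (ι hn k) = ι hn k := by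
        intro k
        have hxk : π (ι hn k) = x k := (congrFun hπ k).symm
        have : π (ι hn k) = π₀ (ι hn k) := by rw [hxk, hπ₀ k]
        simp [Equiv.Perm.mul_apply, this]
      obtain ⟨τ, hτ⟩ := fix_ι_eq_extPerm' hn _ hfix
      exact ⟨τ, Finset.mem_univ τ, by rw [← hτ]; group⟩
  rw [← key, Finset.card_univ, Fintype.card_perm, Fintype.card_fin]

lemma sum_sgn_cancel {x x' : Fin n → Fin d} (hx : ¬ Function.Injective x) :
    ∑ σ : Perm (Fin n), sgn σ * (if x' = x ∘ ⇑σ then 1 else 0) = 0 := by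
  obtain ⟨i, j, hij, hne⟩ : ∃ i j, x i = x j ∧ i ≠ j := by
    rw [Function.Injective] at hx
    push_neg at hx
    obtain ⟨i, j, h1, h2⟩ := hx
    exact ⟨i, j, h1, h2⟩
  apply Finset.sum_involution (fun σ _ => Equiv.swap i j * σ)
  · intro σ _
    have hcomp : x ∘ ⇑(Equiv.swap i j * σ) = x ∘ ⇑σ := by
      funext k
      simp only [Function.comp_apply, Equiv.Perm.mul_apply]
      rcases eq_or_ne (σ k) i with h | h
      · rw [h, Equiv.swap_apply_left, ← hij]
      · rcases eq_or_ne (σ k) j with h2 | h2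
        · rw [h2, Equiv.swap_apply_right, hij]
        · rw [Equiv.swap_apply_of_ne_of_ne h h2]
    rw [hcomp]
    have : sgn (Equiv.swap i j * σ) = - sgn σ := by
      simp [sgn, Equiv.Perm.sign_swap hne]
    rw [this]
    ring
  · intro σ _ _
    intro h
    have h2 : Equiv.swap i j = 1 := mul_right_cancel (h.trans (one_mul σ).symm)
    have := congrArg (fun (p : Perm (Fin n)) => p i) h2
    simp [Equiv.swap_apply_left] at this
    exact hne this.symm
  · intro σ _
    exact Finset.mem_univ _
  · intro σ _
    rw [← mul_assoc, Equiv.swap_mul_self, one_mul]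


lemma ind_mul_ind (P Q : Prop) [Decidable P] [Decidable Q] :
    (if P then (1:ℂ) else 0) * (if Q then 1 else 0) = if P ∧ Q then 1 else 0 := by
  by_cases hP : P <;> by_cases hQ : Q <;> simp [hP, hQ]

lemma ind_and_swap (P Q : Prop) [Decidable P] [Decidable Q] :
    (if P ∧ Q then (1:ℂ) else 0) = if Q then (if P then 1 else 0) else 0 := by
  by_cases hP : P <;> by_cases hQ : Q <;> simp [hP, hQ]

lemma adjA_mul_A (hn : n ≤ d) : (matA d n hn)ᴴ * matA d n hn = antiProj d n := by
  ext x x'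
  have hanti : antiProj d n x x' = ((n.factorial : ℂ))⁻¹ *
      ∑ σ : Perm (Fin n), sgn σ * (if x' = x ∘ ⇑σ then 1 else 0) := by
    simp [antiProj, Matrix.sum_apply, sgn]
  have main : ((matA d n hn)ᴴ * matA d n hn) x x'
      = (cst d n * cst d n) * ((∑ π : Perm (Fin d), if x = ⇑π ∘ ι hn then (1:ℂ) else 0) *
          ∑ σ : Perm (Fin n), sgn σ * (if x' = x ∘ ⇑σ then 1 else 0)) := by
    calc ((matA d n hn)ᴴ * matA d n hn) x x'
        = ∑ y, (Psi d (glue hn x y) * cst d n) * (cst d n * Psi d (glue hn x' y)) := by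
          simp only [Matrix.mul_apply, Matrix.conjTranspose_apply, matA_apply, star_mul',
            star_cst, star_Psi]
          apply Finset.sum_congr rfl
          intro y _
          ring
      _ = (cst d n * cst d n) * ∑ y, Psi d (glue hn x y) * Psi d (glue hn x' y) := by
          rw [Finset.mul_sum]
          apply Finset.sum_congr rfl
          intro y _
          ring
      _ = (cst d n * cst d n) * ∑ π : Perm (Fin d), ∑ π' : Perm (Fin d),
            (sgn π * sgn π') * (if (x = ⇑π ∘ ι hn ∧ x' = ⇑π' ∘ ι hn ∧
              ⇑π ∘ ν hn = ⇑π' ∘ ν hn) then 1 else 0) := by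
          congr 1
          have expand : ∀ y, Psi d (glue hn x y) * Psi d (glue hn x' y)
              = ∑ π : Perm (Fin d), ∑ π' : Perm (Fin d), (sgn π * sgn π') *
                ((if ⇑π = glue hn x y then (1:ℂ) else 0) *
                  (if ⇑π' = glue hn x' y then 1 else 0)) := by
            intro y
            rw [Psi, Psi, Finset.sum_mul_sum]
            apply Finset.sum_congr rfl
            intro π _
            apply Finset.sum_congr rfl
            intro π' _
            ring
          simp only [expand]
          rw [Finset.sum_comm]
          apply Finset.sum_congr rfl
          intro π _
          rw [Finset.sum_comm]
          apply Finset.sum_congr rfl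
          intro π' _
          rw [← Finset.mul_sum]
          congr 1
          have hiff : ∀ y : Fin (d - n) → Fin d,
              ((⇑π = glue hn x y) ∧ (⇑π' = glue hn x' y)) ↔
              ((x = ⇑π ∘ ι hn ∧ x' = ⇑π' ∘ ι hn ∧ ⇑π ∘ ν hn = ⇑π' ∘ ν hn) ∧
                y = ⇑π ∘ ν hn) := by
            intro y
            constructor
            · rintro ⟨h1, h2⟩
              obtain ⟨ha, hb⟩ := (glue_eq_iff hn x y ⇑π).1 h1.symm
              obtain ⟨ha', hb'⟩ := (glue_eq_iff hn x' y ⇑π').1 h2.symm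
              exact ⟨⟨funext ha, funext ha',
                funext fun k => (hb k).symm.trans (hb' k)⟩, funext hb⟩
            · rintro ⟨⟨h1, h2, h3⟩, rfl⟩
              refine ⟨((glue_eq_iff hn x _ ⇑π).2 ⟨fun k => congrFun h1 k, fun k => rfl⟩).symm,
                ((glue_eq_iff hn x' _ ⇑π').2 ⟨fun k => congrFun h2 k,
                  fun k => congrFun h3 k⟩).symm⟩
          calc ∑ y, (if ⇑π = glue hn x y then (1:ℂ) else 0) *
                (if ⇑π' = glue hn x' y then 1 else 0)
              = ∑ y : Fin (d - n) → Fin d, (if y = ⇑π ∘ ν hn then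
                  (if (x = ⇑π ∘ ι hn ∧ x' = ⇑π' ∘ ι hn ∧ ⇑π ∘ ν hn = ⇑π' ∘ ν hn)
                    then (1:ℂ) else 0) else 0) := by
                apply Finset.sum_congr rfl
                intro y _
                rw [ind_mul_ind, if_congr (hiff y) rfl rfl, ind_and_swap]
            _ = _ := by
                rw [Finset.sum_ite_eq' Finset.univ (⇑π ∘ ν hn)]
                simp
      _ = (cst d n * cst d n) * ∑ π : Perm (Fin d), (if x = ⇑π ∘ ι hn then (1:ℂ) else 0) *
            ∑ σ : Perm (Fin n), sgn σ * (if x' = x ∘ ⇑σ then 1 else 0) := by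
          congr 1
          apply Finset.sum_congr rfl
          intro π _
          by_cases hA : x = ⇑π ∘ ι hn
          · rw [if_pos hA, one_mul]
            have step1 : ∀ π' : Perm (Fin d), (sgn π * sgn π') *
                (if (x = ⇑π ∘ ι hn ∧ x' = ⇑π' ∘ ι hn ∧ ⇑π ∘ ν hn = ⇑π' ∘ ν hn) then (1:ℂ) else 0)
                = if ⇑π ∘ ν hn = ⇑π' ∘ ν hn then
                    (sgn π * sgn π') * (if x' = ⇑π' ∘ ι hn then 1 else 0) else 0 := by
              intro π'
              by_cases hC : ⇑π ∘ ν hn = ⇑π' ∘ ν hn <;>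
                by_cases hB : x' = ⇑π' ∘ ι hn <;> simp [hC, hB, hA]
            simp only [step1]
            rw [← Finset.sum_filter]
            refine (Finset.sum_bij (fun (σ : Perm (Fin n)) _ => π * extPerm hn σ)
              ?_ ?_ ?_ ?_).symm
            · intro σ _
              simp only [Finset.mem_filter, Finset.mem_univ, true_and]
              funext k
              simp [Equiv.Perm.mul_apply]
            · intro σ₁ _ σ₂ _ h
              exact extPerm_injective hn (mul_left_cancel h)
            · intro π' hπ'
              simp only [Finset.mem_filter, Finset.mem_univ, true_and] at hπ'
              have hfix : ∀ k, (π⁻¹ * π') (ν hn k) = ν hn k := by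
                intro k
                have : π' (ν hn k) = π (ν hn k) := (congrFun hπ' k).symm
                simp [Equiv.Perm.mul_apply, this]
              obtain ⟨σ, hσ⟩ := fix_ν_eq_extPerm hn _ hfix
              refine ⟨σ, Finset.mem_univ σ, ?_⟩
              show π * extPerm hn σ = π'
              rw [← hσ]
              group
            · intro σ _
              have hval : ⇑(π * extPerm hn σ) ∘ ι hn = x ∘ ⇑σ := by
                funext k
                simp only [Function.comp_apply, Equiv.Perm.mul_apply, extPerm_ι]
                rw [hA]
                rfl
              rw [hval, sgn_mul, sgn_extPerm]
              rw [show sgn π * (sgn π * sgn σ) = (sgn π * sgn π) * sgn σ by ring,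
                sgn_mul_self, one_mul]
          · rw [if_neg hA, zero_mul]
            apply Finset.sum_eq_zero
            intro π' _
            rw [if_neg (fun hC => hA hC.1), mul_zero]
      _ = _ := by rw [Finset.sum_mul]
  rw [main, hanti]
  by_cases hx : Function.Injective x
  · have hcount : (∑ π : Perm (Fin d), if x = ⇑π ∘ ι hn then (1:ℂ) else 0)
        = ((d - n).factorial : ℂ) := by
      rw [Finset.sum_boole, card_extensions hn hx]
    rw [hcount, cst_mul_cst]
    have h1 : ((d - n).factorial : ℂ) ≠ 0 := Nat.cast_ne_zero.2 (Nat.factorial_ne_zero _)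
    have h2 : ((n.factorial : ℕ) : ℂ) ≠ 0 := Nat.cast_ne_zero.2 (Nat.factorial_ne_zero _)
    push_cast
    field_simp
  · have h0 : (∑ π : Perm (Fin d), if x = ⇑π ∘ ι hn then (1:ℂ) else 0) = 0 := by
      apply Finset.sum_eq_zero
      intro π _
      rw [if_neg]
      intro h
      exact hx (by rw [h]; exact π.injective.comp (Fin.castLE_injective hn))
    rw [h0, sum_sgn_cancel hx]
    simp

end Stmt7Aux


/-- For any state `ρ` supported on the antisymmetric subspace of `H^{⊗n}`
and any unitary `U` on `H = ℂ^d`: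
`A_n† (U^{⊗(d-n)} (A_n ρ A_n†) (U†)^{⊗(d-n)}) A_n = (U^*)^{⊗n} ρ (Uᵀ)^{⊗n}`,
i.e. encoding with `A_n`, applying `d-n` parallel uses of `U` and decoding with `A_n†`
implements the conjugate unitary on antisymmetric states. -/
theorem stmt7 (d n : ℕ) (h0 : 0 < n) (hnd : n < d) (hn : n ≤ d)
    (U : Matrix (Fin d) (Fin d) ℂ) (hU : U ∈ Matrix.unitaryGroup (Fin d) ℂ)
    (ρ : Matrix (Fin n → Fin d) (Fin n → Fin d) ℂ) (hρ : ρ.PosSemidef) (htr : ρ.trace = 1)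
    (hsupp₁ : antiProj d n * ρ = ρ) (hsupp₂ : ρ * antiProj d n = ρ) :
    (matA d n hn)ᴴ *
        (tpow (d - n) U * (matA d n hn * ρ * (matA d n hn)ᴴ) * (tpow (d - n) U)ᴴ) *
        matA d n hn =
      tpow n (U.map (starRingEnd ℂ)) * ρ * tpow n Uᵀ := by
  have hsU : star U * U = 1 := hU.1
  have hmap : U.map (starRingEnd ℂ) = (star U)ᵀ := by
    ext i j
    simp [Matrix.map_apply, Matrix.transpose_apply, Matrix.star_apply]
  have hUU : Uᵀ * U.map (starRingEnd ℂ) = 1 := by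
    rw [hmap, ← Matrix.transpose_mul, hsU, Matrix.transpose_one]
  have hdet : U.det * star U.det = 1 := by
    have h := congrArg Matrix.det hsU
    rw [Matrix.det_mul, Matrix.det_one, Matrix.star_eq_conjTranspose,
      Matrix.det_conjTranspose] at h
    rw [mul_comm]
    exact h
  set A := matA d n hn with hA
  set C := tpow n (U.map (starRingEnd ℂ)) with hC
  set T := tpow (d - n) U with hT
  have hTA : T * A = U.det • (A * C) := by
    calc T * A = (T * A * tpow n Uᵀ) * tpow n (U.map (starRingEnd ℂ)) := by
          rw [Matrix.mul_assoc (T * A), Stmt7Aux.tpow_mul, hUU, Stmt7Aux.tpow_one, Matrix.mul_one]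
      _ = U.det • (A * C) := by rw [Stmt7Aux.intertwine hn U, Matrix.smul_mul, hC]
  have hmap2 : (U.map (starRingEnd ℂ))ᴴ = Uᵀ := by
    ext i j
    simp [Matrix.conjTranspose_apply, Matrix.map_apply]
  have hCH : Cᴴ = tpow n Uᵀ := by
    rw [hC, Stmt7Aux.tpow_conjTranspose, hmap2]
  have key : T * (A * ρ * Aᴴ) * Tᴴ = (A * C) * ρ * (Cᴴ * Aᴴ) := by
    calc T * (A * ρ * Aᴴ) * Tᴴ = (T * A) * ρ * (T * A)ᴴ := by
          rw [Matrix.conjTranspose_mul]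
          simp only [Matrix.mul_assoc]
      _ = (U.det • (A * C)) * ρ * (star U.det • (A * C)ᴴ) := by
          rw [hTA, Matrix.conjTranspose_smul]
      _ = (U.det * star U.det) • ((A * C) * ρ * (A * C)ᴴ) := by
          rw [Matrix.smul_mul, Matrix.smul_mul, Matrix.mul_smul, smul_smul]
      _ = (A * C) * ρ * (Cᴴ * Aᴴ) := by rw [hdet, one_smul, Matrix.conjTranspose_mul]
  rw [key]
  have hP : Aᴴ * A = antiProj d n := Stmt7Aux.adjA_mul_A hn
  calc Aᴴ * (A * C * ρ * (Cᴴ * Aᴴ)) * A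
      = (Aᴴ * A) * (C * ρ * Cᴴ) * (Aᴴ * A) := by simp only [Matrix.mul_assoc]
    _ = antiProj d n * (C * ρ * Cᴴ) * antiProj d n := by rw [hP]
    _ = C * ρ * Cᴴ := by
        rw [hCH, ← Matrix.mul_assoc, ← Matrix.mul_assoc, Stmt7Aux.antiProj_tpow_comm,
          Matrix.mul_assoc _ (antiProj d n) ρ, hsupp₁, Matrix.mul_assoc (C * ρ),
          ← Stmt7Aux.antiProj_tpow_comm, ← Matrix.mul_assoc (C * ρ), Matrix.mul_assoc C ρ,
          hsupp₂]
    _ = C * ρ * tpow n Uᵀ := by rw [hCH]
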